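/- In the Hunt–Szymanski reduction, any strictly increasing subsequence of L of length k yields a common subsequence of P and S of length k; in particular it uses at most one element from each block M_S(P(i)), because each block is strictly decreasing. -/

import Mathlib

def huntList {α : Type*} [DecidableEq α] (P S : List α) : List ℕ :=
  (P.map (fun c => ((List.range S.length).filter (fun j => S[j]? = some c)).reverse)).flatten

lemma mem_huntList_lt {α : Type*} [DecidableEq α] {P S : List α} {j : ℕ}
    (h : j ∈ huntList P S) : j < S.length := by
  rw [huntList, List.mem_flatten] at h
  obtain ⟨l, hl, hj⟩ := h
  rw [List.mem_map] at hl
  obtain ⟨c, _, rfl⟩ := hl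
  rw [List.mem_reverse, List.mem_filter, List.mem_range] at hj
  exact hj.1

lemma huntList_map_sublist {α : Type*} [DecidableEq α] (S : List α) (d : α) :
    ∀ (P : List α) (w : List ℕ), w.Sublist (huntList P S) → w.Pairwise (· < ·) →
      (w.map (fun j => S.getD j d)).Sublist P := by
  intro P
  induction P with
  | nil =>
      intro w hw _
      simp only [huntList, List.map_nil, List.flatten_nil, List.sublist_nil] at hw
      simp [hw]
  | cons c P ih =>
      intro w hw hs
      have hsplit : huntList (c :: P) S =
          ((List.range S.length).filter (fun j => S[j]? = some c)).reverse ++ huntList P S := by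
        simp [huntList]
      rw [hsplit, List.sublist_append_iff] at hw
      obtain ⟨w1, w2, rfl, h1, h2⟩ := hw
      have hs2 : w2.Pairwise (· < ·) :=
        List.Pairwise.sublist (List.sublist_append_right w1 w2) hs
      have hb : (((List.range S.length).filter (fun j => S[j]? = some c)).reverse).Pairwise
          (fun a b => b < a) := by
        rw [List.pairwise_reverse]
        exact (List.pairwise_lt_range (n := S.length)).filter _
      have hw1 : w1.Pairwise (fun a b => b < a) := List.Pairwise.sublist h1 hb
      have hs1 : w1.Pairwise (· < ·) := List.Pairwise.sublist (List.sublist_append_left w1 w2) hs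
      match w1 with
      | [] =>
          simpa using (ih w2 h2 hs2).trans (List.sublist_cons_self c P)
      | [j] =>
          have hjmem : j ∈ ((List.range S.length).filter (fun j => S[j]? = some c)).reverse :=
            h1.mem (by simp)
          rw [List.mem_reverse, List.mem_filter, List.mem_range] at hjmem
          have hjc : S.getD j d = c := by
            have h1 := hjmem.1
            have h2' : S[j]? = some c := by simpa using hjmem.2
            rw [List.getD_eq_getElem?_getD, h2']
            rfl
          simp only [List.map_append, List.map_cons, List.map_nil, List.singleton_append, hjc]
          exact (ih w2 h2 hs2).cons₂ c
      | a :: b :: t =>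
          exfalso
          have hab1 : b < a := (List.pairwise_cons.mp hw1).1 b (by simp)
          have hab2 : a < b := (List.pairwise_cons.mp hs1).1 b (by simp)
          omega

theorem increasing_subseq_yields_common_subseq {α : Type*} [DecidableEq α]
    (P S : List α) (w : List ℕ) (hw : w.Sublist (huntList P S))
    (hinc : w.Pairwise (· < ·)) :
    ∃ u : List α, u.Sublist P ∧ u.Sublist S ∧ u.length = w.length := by
  have hval : ∀ j ∈ w, j < S.length := fun j hj => mem_huntList_lt (hw.mem hj)
  rcases w with _ | ⟨j0, w'⟩
  · exact ⟨[], List.nil_sublist P, List.nil_sublist S, rfl⟩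
  · set w := j0 :: w' with hwdef
    have hS : S ≠ [] := by
      intro h
      have := hval j0 (by simp [hwdef])
      simp [h] at this
    set d := S.head hS with hd
    refine ⟨w.map (fun j => S.getD j d), huntList_map_sublist S d P w hw hinc, ?_, by simp⟩
    -- sublist of S
    have key : w.map (fun j => S.getD j d) =
        List.map S.get (w.attach.map (fun x => (⟨x.1, hval x.1 x.2⟩ : Fin S.length))) := by
      rw [List.map_map]
      have : (S.get ∘ fun x : {x // x ∈ w} => (⟨x.1, hval x.1 x.2⟩ : Fin S.length)) =
          fun x : {x // x ∈ w} => S.getD x.1 d := by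
        funext x
        simp [List.getElem?_eq_getElem (hval x.1 x.2)]
      rw [this]
      exact (List.attach_map_val (l := w) (f := _)).symm
    rw [key]
    apply List.map_getElem_sublist (l := S)
    rw [List.pairwise_map]
    have h0 : (w.attach.map (fun i => i.1)).Pairwise (· < ·) := by
      rw [List.attach_map_val (l := w) (f := fun j => j)]; simpa using hinc
    have h1 := List.pairwise_map.mp h0
    simpa using h1
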